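/- For a finite set Y with full-support reference distribution π_ref, reward R : Y → ℝ, and β > 0: for every distribution π on Y, the minimum over perturbations ΔR with Σ_y π_ref(y)·exp(ΔR(y)/β) ≤ 1 of E_{y∼π}[R(y) − ΔR(y)] equals E_{y∼π}[R(y)] − β·KL(π‖π_ref). (The inner adversarial minimization recovers exactly the KL regularizer.) -/

import Mathlib

open Finset Real

/-- Per-term Gibbs inequality. -/
lemma key_term (β pref p f : ℝ) (hβ : 0 < β) (hpref : 0 < pref) (hp : 0 ≤ p) :
    p * f ≤ β * (p * Real.log (p / pref)) + β * (pref * Real.exp (f / β) - p) := by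
  rcases eq_or_lt_of_le hp with h | h
  · rw [← h]
    simp only [zero_mul, mul_zero, sub_zero, zero_add]
    positivity
  · set q := pref * Real.exp (f / β) with hqdef
    have hq : 0 < q := by positivity
    have hfβ : f / β = Real.log (q / pref) := by
      rw [hqdef, mul_comm, mul_div_assoc, div_self hpref.ne', mul_one, Real.log_exp]
    have hf : f = β * Real.log (q / pref) := by
      field_simp at hfβ; linarith [hfβ]
    have hlog : Real.log (q / pref) = Real.log (p / pref) + Real.log (q / p) := by
      rw [Real.log_div hq.ne' hpref.ne', Real.log_div h.ne' hpref.ne',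
        Real.log_div hq.ne' h.ne']
      ring
    have hle : Real.log (q / p) ≤ q / p - 1 :=
      Real.log_le_sub_one_of_pos (div_pos hq h)
    have hple : p * Real.log (q / p) ≤ q - p := by
      have h1 := mul_le_mul_of_nonneg_left hle h.le
      calc p * Real.log (q / p) ≤ p * (q / p - 1) := h1
        _ = q - p := by field_simp
    rw [hf, hlog]
    nlinarith [mul_le_mul_of_nonneg_left hple hβ.le]

theorem inner_min_eq_kl
    (Y : Type) [Fintype Y] [Nonempty Y]
    (pref : Y → ℝ) (href : ∀ y, 0 < pref y) (hrefsum : ∑ y, pref y = 1)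
    (p : Y → ℝ) (hp : ∀ y, 0 ≤ p y) (hpsum : ∑ y, p y = 1)
    (R : Y → ℝ) (β : ℝ) (hβ : 0 < β) :
    (⨅ ΔR : {f : Y → ℝ // ∑ y, pref y * Real.exp (f y / β) ≤ 1},
        ∑ y, p y * (R y - ΔR.1 y))
      = (∑ y, p y * R y) - β * ∑ y, p y * Real.log (p y / pref y) := by
  haveI hne : Nonempty {f : Y → ℝ // ∑ y, pref y * Real.exp (f y / β) ≤ 1} :=
    ⟨⟨fun _ => 0, by simp [hrefsum]⟩⟩
  set T : ℝ := (∑ y, p y * R y) - β * ∑ y, p y * Real.log (p y / pref y) with hT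
  -- Lower bound: every feasible ΔR gives value ≥ T.
  have hlb : ∀ ΔR : {f : Y → ℝ // ∑ y, pref y * Real.exp (f y / β) ≤ 1},
      T ≤ ∑ y, p y * (R y - ΔR.1 y) := by
    rintro ⟨f, hf⟩
    have h2 : ∑ y, p y * f y ≤ β * ∑ y, p y * Real.log (p y / pref y) := by
      have hA := Finset.sum_le_sum
        (fun y (_ : y ∈ Finset.univ) => key_term β (pref y) (p y) (f y) hβ (href y) (hp y))
      rw [Finset.sum_add_distrib, ← Finset.mul_sum, ← Finset.mul_sum] at hA
      have hB : ∑ y, (pref y * Real.exp (f y / β) - p y) ≤ 0 := by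
        rw [Finset.sum_sub_distrib, hpsum]; linarith [hf]
      have hC : β * ∑ y, (pref y * Real.exp (f y / β) - p y) ≤ 0 :=
        mul_nonpos_of_nonneg_of_nonpos hβ.le hB
      linarith
    have hsplit : ∑ y, p y * (R y - f y) = (∑ y, p y * R y) - ∑ y, p y * f y := by
      rw [← Finset.sum_sub_distrib]
      exact Finset.sum_congr rfl fun y _ => by ring
    rw [hsplit, hT]; linarith
  have hbdd : BddBelow (Set.range fun ΔR : {f : Y → ℝ // ∑ y, pref y * Real.exp (f y / β) ≤ 1} =>
      ∑ y, p y * (R y - ΔR.1 y)) := ⟨T, by rintro x ⟨ΔR, rfl⟩; exact hlb ΔR⟩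
  refine le_antisymm ?_ (le_ciInf hlb)
  -- Upper bound: for each ε > 0 construct a feasible ΔR with value ≤ T + ε.
  refine le_of_forall_pos_le_add ?_
  intro ε hε
  set n : ℝ := (Fintype.card Y : ℝ) with hn
  have hn0 : 0 < n := by
    simp only [hn, Nat.cast_pos]; exact Fintype.card_pos
  set s : ℝ := (Real.exp (ε / β) - 1) / n with hs
  have hs0 : 0 < s := by
    apply div_pos _ hn0
    have : 1 < Real.exp (ε / β) := by
      rw [← Real.exp_zero]; exact Real.exp_lt_exp.mpr (by positivity)
    linarith
  have hsn : 1 + s * n = Real.exp (ε / β) := by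
    rw [hs, div_mul_cancel₀ _ hn0.ne']; ring
  have hsn0 : 0 < 1 + s * n := by nlinarith
  set c : ℝ := (1 + s * n)⁻¹ with hc
  have hc0 : 0 < c := by rw [hc]; exact inv_pos.mpr hsn0
  have hc1 : c * (1 + s * n) = 1 := by rw [hc, inv_mul_cancel₀ hsn0.ne']
  set f : Y → ℝ := fun y => β * Real.log (c * (p y + s) / pref y) with hfdef
  have harg : ∀ y, 0 < c * (p y + s) / pref y := fun y => by
    have := hp y; have := href y; positivity
  have hexp : ∀ y, Real.exp (f y / β) = c * (p y + s) / pref y := fun y => by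
    rw [hfdef]; simp only
    rw [mul_comm, mul_div_assoc, div_self hβ.ne', mul_one, Real.exp_log (harg y)]
  have hfeas : ∑ y, pref y * Real.exp (f y / β) ≤ 1 := by
    have h1 : ∀ y : Y, pref y * Real.exp (f y / β) = c * (p y + s) := fun y => by
      rw [hexp y, mul_div_assoc', mul_comm, mul_div_assoc, div_self (href y).ne', mul_one]
    rw [Finset.sum_congr rfl fun y _ => h1 y, ← Finset.mul_sum, Finset.sum_add_distrib,
      hpsum, Finset.sum_const, nsmul_eq_mul, Finset.card_univ, ← hn]
    have : c * (1 + n * s) = 1 := by rw [mul_comm n s]; exact hc1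
    linarith
  refine ciInf_le_of_le hbdd ⟨f, hfeas⟩ ?_
  -- value of this f
  have hterm : ∀ y : Y, p y * (β * Real.log (p y / pref y) - f y)
      ≤ p y * (β * Real.log (1 / c)) := by
    intro y
    rcases eq_or_lt_of_le (hp y) with h | h
    · rw [← h]; simp
    · have h1 : Real.log (p y / pref y) - Real.log (c * (p y + s) / pref y)
          = Real.log (p y / (c * (p y + s))) := by
        rw [Real.log_div h.ne' (href y).ne',
          Real.log_div (by positivity : (c * (p y + s)) ≠ 0) (href y).ne',
          Real.log_div h.ne' (by positivity : (c * (p y + s)) ≠ 0)]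
        ring
      have h2 : Real.log (p y / (c * (p y + s))) ≤ Real.log (1 / c) := by
        apply Real.log_le_log (by positivity)
        rw [div_le_div_iff₀ (by positivity) hc0]
        nlinarith
      have h3 : β * Real.log (p y / pref y) - f y
          = β * Real.log (p y / (c * (p y + s))) := by
        rw [hfdef]; simp only; rw [← h1]; ring
      rw [h3]
      have := mul_le_mul_of_nonneg_left (mul_le_mul_of_nonneg_left h2 hβ.le) (hp y)
      linarith
  have hsum2 : ∑ y, p y * (β * Real.log (p y / pref y) - f y)
      ≤ β * Real.log (1 / c) := by
    calc ∑ y, p y * (β * Real.log (p y / pref y) - f y)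
        ≤ ∑ y, p y * (β * Real.log (1 / c)) := Finset.sum_le_sum fun y _ => hterm y
      _ = β * Real.log (1 / c) := by rw [← Finset.sum_mul, hpsum, one_mul]
  have hlogc : Real.log (1 / c) = ε / β := by
    rw [hc, one_div, inv_inv, hsn, Real.log_exp]
  have hεβ : β * (ε / β) = ε := by field_simp
  rw [hlogc, hεβ] at hsum2
  have hval : ∑ y, p y * (R y - f y)
      = (∑ y, p y * R y) - β * (∑ y, p y * Real.log (p y / pref y))
        + ∑ y, p y * (β * Real.log (p y / pref y) - f y) := by
    have h4 : ∀ y : Y, p y * (R y - f y)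
        = (p y * R y - β * (p y * Real.log (p y / pref y)))
          + p y * (β * Real.log (p y / pref y) - f y) := fun y => by ring
    rw [Finset.sum_congr rfl fun y _ => h4 y, Finset.sum_add_distrib,
      Finset.sum_sub_distrib, ← Finset.mul_sum]
  rw [hval, hT]; linarith
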